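/- Let T > 0, C ≥ 0, and let G : [0, T] → Mat(n, ℝ) be a continuously differentiable family of symmetric positive-definite matrices. If ∫₀^{T} √(tr((G(t)⁻¹ G'(t))²)) dt ≤ C, then for every v ∈ ℝⁿ, e^{−C}·⟨v, G(0) v⟩ ≤ ⟨v, G(T) v⟩ ≤ e^{C}·⟨v, G(0) v⟩; that is, the quadratic forms G(T) and G(0) are uniformly equivalent with constants e^{−C} and e^{C}. -/

import Mathlib

open Set Matrix intervalIntegral

attribute [local instance] Matrix.frobeniusNormedAddCommGroup Matrix.frobeniusNormedSpace

section helpers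
variable {n : ℕ}

private lemma quad_cs' (S : Matrix (Fin n) (Fin n) ℝ) (w : Fin n → ℝ) :
    |w ⬝ᵥ S *ᵥ w| ≤ Real.sqrt (∑ i, ∑ j, S i j ^ 2) * (w ⬝ᵥ w) := by
  have hww : w ⬝ᵥ w = ∑ j, w j ^ 2 := by simp [dotProduct, sq]
  have h1 : (w ⬝ᵥ S *ᵥ w) ^ 2 ≤ (∑ i, w i ^ 2) * ∑ i, (S *ᵥ w) i ^ 2 :=
    Finset.sum_mul_sq_le_sq_mul_sq Finset.univ w (S *ᵥ w)
  have h2 : ∑ i, (S *ᵥ w) i ^ 2 ≤ (∑ i, ∑ j, S i j ^ 2) * ∑ j, w j ^ 2 := by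
    rw [Finset.sum_mul]
    exact Finset.sum_le_sum fun i _ => Finset.sum_mul_sq_le_sq_mul_sq Finset.univ (S i) w
  have h3 : (w ⬝ᵥ S *ᵥ w) ^ 2 ≤ (∑ i, ∑ j, S i j ^ 2) * (w ⬝ᵥ w) ^ 2 := by
    rw [hww, sq (∑ j, w j ^ 2)]
    calc (w ⬝ᵥ S *ᵥ w) ^ 2 ≤ (∑ i, w i ^ 2) * ∑ i, (S *ᵥ w) i ^ 2 := h1
    _ ≤ (∑ i, w i ^ 2) * ((∑ i, ∑ j, S i j ^ 2) * ∑ j, w j ^ 2) :=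
        mul_le_mul_of_nonneg_left h2 (Finset.sum_nonneg fun i _ => sq_nonneg _)
    _ = (∑ i, ∑ j, S i j ^ 2) * ((∑ j, w j ^ 2) * ∑ j, w j ^ 2) := by ring
  have hw0 : 0 ≤ w ⬝ᵥ w := by rw [hww]; exact Finset.sum_nonneg fun i _ => sq_nonneg _
  calc |w ⬝ᵥ S *ᵥ w| = Real.sqrt ((w ⬝ᵥ S *ᵥ w) ^ 2) := (Real.sqrt_sq_eq_abs _).symm
  _ ≤ Real.sqrt ((∑ i, ∑ j, S i j ^ 2) * (w ⬝ᵥ w) ^ 2) := Real.sqrt_le_sqrt h3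
  _ = Real.sqrt (∑ i, ∑ j, S i j ^ 2) * (w ⬝ᵥ w) := by
      rw [Real.sqrt_mul (x := ∑ i, ∑ j, S i j ^ 2) (by positivity),
        Real.sqrt_sq hw0]

private lemma conj_dot' {B P : Matrix (Fin n) (Fin n) ℝ} (hBs : Bᵀ = B) (x y : Fin n → ℝ) :
    x ⬝ᵥ (B * P * B) *ᵥ y = (B *ᵥ x) ⬝ᵥ P *ᵥ (B *ᵥ y) := by
  rw [← Matrix.mulVec_mulVec, ← Matrix.mulVec_mulVec, Matrix.dotProduct_mulVec x,
    ← Matrix.mulVec_transpose, hBs]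

private lemma key_ineq' (A M : Matrix (Fin n) (Fin n) ℝ) (hA : A.PosDef) (hM : Mᵀ = M)
    (v : Fin n → ℝ) :
    |v ⬝ᵥ M *ᵥ v| ≤ Real.sqrt (((A⁻¹ * M) ^ 2).trace) * (v ⬝ᵥ A *ᵥ v) := by
  have hAinv : A⁻¹.PosDef := hA.inv
  obtain ⟨B, hB, hB2⟩ : ∃ B : Matrix (Fin n) (Fin n) ℝ, B.PosSemidef ∧ B * B = A⁻¹ := by
    open scoped MatrixOrder in
    exact ⟨CFC.sqrt A⁻¹, (CFC.sqrt_nonneg _).posSemidef,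
      CFC.sqrt_mul_sqrt_self _ hAinv.posSemidef.nonneg⟩
  have hBs : Bᵀ = B := by simpa [Matrix.IsHermitian] using hB.1
  have hA1 : A⁻¹ * A = 1 := Matrix.nonsing_inv_mul A hA.det_pos.ne'.isUnit
  have hA2 : A * A⁻¹ = 1 := Matrix.mul_nonsing_inv A hA.det_pos.ne'.isUnit
  have hcomm : A * B = B * A := by
    have h1 : B * A⁻¹ = A⁻¹ * B := by rw [← hB2, mul_assoc]
    calc A * B = A * (B * (A⁻¹ * A)) := by rw [hA1, mul_one]
    _ = A * (B * A⁻¹) * A := by simp only [mul_assoc]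
    _ = A * (A⁻¹ * B) * A := by rw [h1]
    _ = B * A := by rw [← mul_assoc, hA2, one_mul]
  have hBAB : B * A * B = 1 := by rw [← hcomm, mul_assoc, hB2, hA2]
  have hBBA : B * (B * A) = 1 := by rw [← mul_assoc, hB2, hA1]
  set w : Fin n → ℝ := (B * A) *ᵥ v with hw
  have hBw : B *ᵥ w = v := by rw [hw, Matrix.mulVec_mulVec, hBBA, Matrix.one_mulVec]
  set S := B * M * B with hS
  have hSs : Sᵀ = S := by
    rw [hS, Matrix.transpose_mul, Matrix.transpose_mul, hBs, hM, mul_assoc]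
  have hid1 : v ⬝ᵥ M *ᵥ v = w ⬝ᵥ S *ᵥ w := by rw [hS, conj_dot' hBs, hBw]
  have hid2 : v ⬝ᵥ A *ᵥ v = w ⬝ᵥ w := by
    have := conj_dot' (P := A) hBs w w
    rw [hBAB] at this
    rw [← hBw, ← this, Matrix.one_mulVec]
  have htr : ((A⁻¹ * M) ^ 2).trace = ∑ i, ∑ j, S i j ^ 2 := by
    have h4 : ((A⁻¹ * M) ^ 2).trace = (S * S).trace := by
      rw [pow_two, ← hB2, hS]
      rw [show B * B * M * (B * B * M) = B * (B * M * B * (B * M)) by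
        simp only [mul_assoc]]
      rw [Matrix.trace_mul_comm]
      simp only [mul_assoc]
    rw [h4]
    have h6 : (S * S).trace = ∑ i, ∑ j, S i j * S j i := by
      simp [Matrix.trace, Matrix.mul_apply, Matrix.diag]
    rw [h6]
    refine Finset.sum_congr rfl fun i _ => Finset.sum_congr rfl fun j _ => ?_
    have h5 : S j i = S i j := by rw [← Matrix.transpose_apply S i j, hSs]
    rw [h5, sq]
  rw [hid1, hid2, htr]
  exact quad_cs' S w

private lemma deriv_symm' (G G' : ℝ → Matrix (Fin n) (Fin n) ℝ) (T : ℝ) (hT : 0 < T)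
    (hderiv : ∀ t ∈ Icc 0 T, HasDerivAt G (G' t) t)
    (hsymm : ∀ t ∈ Icc 0 T, (G t).IsSymm) :
    ∀ t ∈ Icc 0 T, (G' t)ᵀ = G' t := by
  intro t ht
  set L := (Matrix.transposeLinearEquiv (Fin n) (Fin n) ℝ ℝ).toLinearMap.toContinuousLinearMap
    with hL
  have h2 : HasDerivAt (fun s => (G s)ᵀ) (G' t)ᵀ t :=
    L.hasFDerivAt.comp_hasDerivAt t (hderiv t ht)
  have h2' : HasDerivWithinAt G (G' t)ᵀ (Icc 0 T) t :=
    (h2.hasDerivWithinAt).congr (fun s hs => (hsymm s hs).symm) (hsymm t ht).symm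
  have h1 : HasDerivWithinAt G (G' t) (Icc 0 T) t := (hderiv t ht).hasDerivWithinAt
  exact (h2'.derivWithin (uniqueDiffOn_Icc hT t ht)).symm.trans
    (h1.derivWithin (uniqueDiffOn_Icc hT t ht))

end helpers

/-- Let `T > 0`, `C ≥ 0`, and `G : [0,T] → Mat(n,ℝ)` a continuously differentiable family of
symmetric positive-definite matrices. If `∫₀^T √(tr((G(t)⁻¹ G'(t))²)) dt ≤ C`, then for every
`v ∈ ℝⁿ`, `e^{−C} ⟨v, G(0) v⟩ ≤ ⟨v, G(T) v⟩ ≤ e^{C} ⟨v, G(0) v⟩`. -/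
theorem metric_uniform_equivalence {n : ℕ} (T C : ℝ) (hT : 0 < T) (hC : 0 ≤ C)
    (G G' : ℝ → Matrix (Fin n) (Fin n) ℝ)
    (hderiv : ∀ t ∈ Icc 0 T, HasDerivAt G (G' t) t)
    (hcont : ContinuousOn G' (Icc 0 T))
    (hsymm : ∀ t ∈ Icc 0 T, (G t).IsSymm)
    (hpos : ∀ t ∈ Icc 0 T, (G t).PosDef)
    (hint : (∫ t in (0 : ℝ)..T, Real.sqrt ((((G t)⁻¹ * G' t) ^ 2).trace)) ≤ C) :
    ∀ v : Fin n → ℝ,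
      Real.exp (-C) * (v ⬝ᵥ (G 0).mulVec v) ≤ v ⬝ᵥ (G T).mulVec v ∧
      v ⬝ᵥ (G T).mulVec v ≤ Real.exp C * (v ⬝ᵥ (G 0).mulVec v) := by
  intro v
  have h0T : (0 : ℝ) ∈ Icc (0:ℝ) T := ⟨le_rfl, hT.le⟩
  have hTT : T ∈ Icc (0:ℝ) T := ⟨hT.le, le_rfl⟩
  by_cases hv : v = 0
  · subst hv; simp
  -- the scalar functions
  set f : ℝ → ℝ := fun t => v ⬝ᵥ (G t) *ᵥ v with hf
  set f' : ℝ → ℝ := fun t => v ⬝ᵥ (G' t) *ᵥ v with hf'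
  set φ : ℝ → ℝ := fun t => Real.sqrt ((((G t)⁻¹ * G' t) ^ 2).trace) with hφ
  -- the evaluation continuous linear map
  set L : Matrix (Fin n) (Fin n) ℝ →ₗ[ℝ] ℝ :=
    { toFun := fun M => v ⬝ᵥ M *ᵥ v
      map_add' := fun M N => by simp [Matrix.add_mulVec, dotProduct_add]
      map_smul' := fun c M => by simp [Matrix.smul_mulVec, dotProduct_smul] } with hLdef
  have hfd : ∀ t ∈ Icc (0:ℝ) T, HasDerivAt f (f' t) t := fun t ht =>
    L.toContinuousLinearMap.hasFDerivAt.comp_hasDerivAt t (hderiv t ht)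
  have hfpos : ∀ t ∈ Icc (0:ℝ) T, 0 < f t := fun t ht => by
    simpa using (hpos t ht).dotProduct_mulVec_pos hv
  have hG'symm := deriv_symm' G G' T hT hderiv hsymm
  have hkey : ∀ t ∈ Icc (0:ℝ) T, |f' t| ≤ φ t * f t := fun t ht =>
    key_ineq' (G t) (G' t) (hpos t ht) (hG'symm t ht) v
  -- continuity facts
  have hGc : ContinuousOn G (Icc 0 T) := fun t ht =>
    ((hderiv t ht).continuousAt).continuousWithinAt
  have hfc : ContinuousOn f (Icc 0 T) :=
    L.toContinuousLinearMap.continuous.comp_continuousOn hGc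
  have hf'c : ContinuousOn f' (Icc 0 T) :=
    L.toContinuousLinearMap.continuous.comp_continuousOn hcont
  have hdetc : ContinuousOn (fun t => (G t).det) (Icc 0 T) :=
    (continuous_id.matrix_det).comp_continuousOn hGc
  have hdetne : ∀ t ∈ Icc (0:ℝ) T, (G t).det ≠ 0 := fun t ht => (hpos t ht).det_pos.ne'
  have hGinvc : ContinuousOn (fun t => (G t)⁻¹) (Icc 0 T) := by
    have : ContinuousOn (fun t => (Ring.inverse (G t).det) • (G t).adjugate) (Icc 0 T) := by
      have h1 : ContinuousOn (fun t => ((G t).det)⁻¹) (Icc 0 T) := hdetc.inv₀ hdetne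
      have h2 : ContinuousOn (fun t => (G t).adjugate) (Icc 0 T) :=
        (continuous_id.matrix_adjugate).comp_continuousOn hGc
      simp only [Ring.inverse_eq_inv']
      exact h1.smul h2
    simpa only [← Matrix.inv_def] using this
  have hφc : ContinuousOn φ (Icc 0 T) := by
    have hK : Continuous (fun p : Matrix (Fin n) (Fin n) ℝ × Matrix (Fin n) (Fin n) ℝ =>
        (((p.1 * p.2) * (p.1 * p.2)).trace)) :=
      ((continuous_fst.matrix_mul continuous_snd).matrix_mul
        (continuous_fst.matrix_mul continuous_snd)).matrix_trace
    have hpair : ContinuousOn (fun t => ((G t)⁻¹, G' t)) (Icc 0 T) := hGinvc.prodMk hcont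
    have := Real.continuous_sqrt.comp_continuousOn (hK.comp_continuousOn hpair)
    simpa only [hφ, ← pow_two, Function.comp_def] using this
  -- FTC
  have huIcc : uIcc (0:ℝ) T = Icc 0 T := uIcc_of_le hT.le
  have hdivc : ContinuousOn (fun t => f' t / f t) (Icc 0 T) :=
    hf'c.div hfc fun t ht => (hfpos t ht).ne'
  have hftc : ∫ t in (0:ℝ)..T, f' t / f t = Real.log (f T) - Real.log (f 0) := by
    refine intervalIntegral.integral_eq_sub_of_hasDerivAt (f := fun t => Real.log (f t)) ?_ ?_
    · intro t ht
      rw [huIcc] at ht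
      exact (hfd t ht).log (hfpos t ht).ne'
    · exact (hdivc.mono (by rw [huIcc])).intervalIntegrable
  -- integral bound
  have hintφ : IntervalIntegrable φ MeasureTheory.volume 0 T :=
    (hφc.mono (by rw [huIcc])).intervalIntegrable
  have hintdiv : IntervalIntegrable (fun t => f' t / f t) MeasureTheory.volume 0 T :=
    (hdivc.mono (by rw [huIcc])).intervalIntegrable
  have habs : |∫ t in (0:ℝ)..T, f' t / f t| ≤ C := by
    calc |∫ t in (0:ℝ)..T, f' t / f t| ≤ ∫ t in (0:ℝ)..T, |f' t / f t| :=
        intervalIntegral.abs_integral_le_integral_abs hT.le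
    _ ≤ ∫ t in (0:ℝ)..T, φ t := by
        refine intervalIntegral.integral_mono_on hT.le ?_ hintφ ?_
        · exact hintdiv.abs
        · intro t ht
          rw [abs_div, abs_of_pos (hfpos t ht)]
          rw [div_le_iff₀ (hfpos t ht)]
          exact hkey t ht
    _ ≤ C := hint
  rw [hftc] at habs
  rw [abs_le] at habs
  have hfT := hfpos T hTT
  have hf0 := hfpos 0 h0T
  constructor
  · have h1 : -C + Real.log (f 0) ≤ Real.log (f T) := by linarith [habs.1]
    have := Real.exp_le_exp.mpr h1
    rwa [Real.exp_add, Real.exp_log hf0, Real.exp_log hfT] at this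
  · have h1 : Real.log (f T) ≤ C + Real.log (f 0) := by linarith [habs.2]
    have := Real.exp_le_exp.mpr h1
    rwa [Real.exp_add, Real.exp_log hf0, Real.exp_log hfT] at this
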